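/- For any v = (v1,v2,v3) ∈ R^3 with v3 + g > 0, the map β_ψ followed by h_ψ is the identity: h_ψ(β_ψ(v)) = v. That is, with T = sqrt(v1^2+v2^2+(v3+g)^2), φ = arcsin((v1 sinψ - v2 cosψ)/T), θ = arctan((v1 cosψ + v2 sinψ)/(v3+g)), one has T(cosφ sinθ cosψ + sinφ sinψ) = v1, T(cosφ sinθ sinψ - sinφ cosψ) = v2, and T cosφ cosθ - g = v3. -/

import Mathlib

open Real

set_option maxHeartbeats 1000000 in
/-- The flatness-based feedback exactly linearizes the dynamics:
`h_ψ(β_ψ(v)) = v` for any `v` with `v₃ + g > 0`. -/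
theorem stmt5 (g ψ v1 v2 v3 : ℝ) (hg : 0 < g) (hv3 : 0 < v3 + g) :
    let T := Real.sqrt (v1 ^ 2 + v2 ^ 2 + (v3 + g) ^ 2)
    let φ := Real.arcsin ((v1 * Real.sin ψ - v2 * Real.cos ψ) / T)
    let θ := Real.arctan ((v1 * Real.cos ψ + v2 * Real.sin ψ) / (v3 + g))
    T * (Real.cos φ * Real.sin θ * Real.cos ψ + Real.sin φ * Real.sin ψ) = v1 ∧
    T * (Real.cos φ * Real.sin θ * Real.sin ψ - Real.sin φ * Real.cos ψ) = v2 ∧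
    T * Real.cos φ * Real.cos θ - g = v3 := by
  intro T φ θ
  set a := v1 * Real.cos ψ + v2 * Real.sin ψ with ha
  set b := v1 * Real.sin ψ - v2 * Real.cos ψ with hb
  set c := v3 + g with hc
  have hpyth : Real.sin ψ ^ 2 + Real.cos ψ ^ 2 = 1 := Real.sin_sq_add_cos_sq ψ
  have hsum : v1 ^ 2 + v2 ^ 2 + c ^ 2 = a ^ 2 + b ^ 2 + c ^ 2 := by
    simp only [ha, hb]; nlinarith [hpyth]
  have hsumpos : 0 < v1 ^ 2 + v2 ^ 2 + c ^ 2 := by nlinarith [sq_nonneg v1, sq_nonneg v2]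
  have hTpos : 0 < T := Real.sqrt_pos.2 hsumpos
  have hT2 : T ^ 2 = a ^ 2 + b ^ 2 + c ^ 2 := by
    rw [← hsum]; exact Real.sq_sqrt hsumpos.le
  have hb2 : b ^ 2 ≤ T ^ 2 := by nlinarith [sq_nonneg a, sq_nonneg c]
  have h1 : -1 ≤ b / T := by
    rw [le_div_iff₀ hTpos]; nlinarith [sq_nonneg (T + b)]
  have h2 : b / T ≤ 1 := by
    rw [div_le_one hTpos]; nlinarith [sq_nonneg (T - b)]
  have hspos : 0 < Real.sqrt (a ^ 2 + c ^ 2) := Real.sqrt_pos.2 (by nlinarith [sq_nonneg a])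
  set s := Real.sqrt (a ^ 2 + c ^ 2) with hs
  have hs2 : s ^ 2 = a ^ 2 + c ^ 2 := Real.sq_sqrt (by nlinarith [sq_nonneg a])
  have key : 1 - (b / T) ^ 2 = (s / T) ^ 2 := by
    rw [div_pow, div_pow, hs2]
    rw [eq_div_iff (by positivity), sub_mul, div_mul_cancel₀ _ (by positivity : T ^ 2 ≠ 0)]
    linarith [hT2]
  have hcosφ : Real.cos φ = s / T := by
    show Real.cos (Real.arcsin (b / T)) = s / T
    rw [Real.cos_arcsin, key]
    exact Real.sqrt_sq (by positivity)
  have hsinφ : Real.sin φ = b / T := Real.sin_arcsin h1 h2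
  have hroot : Real.sqrt (1 + (a / c) ^ 2) = s / c := by
    rw [show 1 + (a / c) ^ 2 = (s / c) ^ 2 by
      rw [div_pow, div_pow, hs2]; field_simp; ring]
    exact Real.sqrt_sq (by positivity)
  have hsinθ : Real.sin θ = a / s := by
    show Real.sin (Real.arctan (a / c)) = a / s
    rw [Real.sin_arctan, hroot]
    field_simp
  have hcosθ : Real.cos θ = c / s := by
    show Real.cos (Real.arctan (a / c)) = c / s
    rw [Real.cos_arctan, hroot]
    field_simp
  have hTne : T ≠ 0 := hTpos.ne'
  have hsne : s ≠ 0 := hspos.ne'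
  refine ⟨?_, ?_, ?_⟩
  · rw [hcosφ, hsinφ, hsinθ]
    field_simp
    linear_combination v1 * hpyth
  · rw [hcosφ, hsinφ, hsinθ]
    field_simp
    linear_combination v2 * hpyth
  · rw [hcosφ, hcosθ]
    field_simp
    simp only [hc]; ring
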